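/- arXiv:math/0302088 — 2 statements merged into one kernel-verified Lean document; each statement's English description precedes it below -/
import Mathlib

section
/- The theta series Σ_{n ∈ ℤ^g} exp((iπ/k)·nᵗ τ n + 2iπ n·z) converges absolutely for every τ in the Siegel upper half-space (complex symmetric matrices with positive-definite imaginary part) and every z ∈ ℂ^g. -/
open Matrix Complex

private lemma theta_aux_pi_prod_summable {f : ℤ → ℝ} (hf : ∀ x, 0 ≤ f x) (hs : Summable f)
    (g : ℕ) : Summable (fun n : Fin g → ℤ => ∏ i, f (n i)) := by
  induction g with
  | zero => exact .of_finite
  | succ m ih =>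
      have h := hs.mul_of_nonneg ih hf (fun n => Finset.prod_nonneg fun i _ => hf _)
      rw [← (Fin.consEquiv (fun _ : Fin (m+1) => ℤ)).summable_iff]
      refine h.congr fun p => ?_
      simp [Fin.consEquiv, Fin.prod_univ_succ]

private lemma theta_aux_posdef_bound {g : ℕ} (hg : 0 < g) (A : Matrix (Fin g) (Fin g) ℝ)
    (hA : A.PosDef) : ∃ c > 0, ∀ x : Fin g → ℝ, c * (∑ i, x i ^ 2) ≤ x ⬝ᵥ A.mulVec x := by
  set Q : (Fin g → ℝ) → ℝ := fun x => x ⬝ᵥ A.mulVec x with hQdef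
  have hQcont : Continuous Q := by
    simp only [hQdef, dotProduct, Matrix.mulVec, dotProduct]
    fun_prop
  set e := EuclideanSpace.equiv (Fin g) ℝ
  obtain ⟨u, hu, hmin⟩ := (isCompact_sphere (0 : EuclideanSpace ℝ (Fin g)) 1).exists_isMinOn
    ⟨EuclideanSpace.single ⟨0, hg⟩ 1, by simp⟩
    ((hQcont.comp e.continuous).continuousOn)
  have hune : (e u) ≠ 0 := by
    intro h
    have : ‖u‖ = 1 := by simpa using hu
    rw [show u = 0 from by exact e.map_eq_zero_iff.mp h] at this
    simp at this
  have hc : 0 < Q (e u) := hA.dotProduct_mulVec_pos hune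
  refine ⟨Q (e u), hc, fun x => ?_⟩
  rcases eq_or_ne x 0 with rfl | hx
  · simp [hQdef]
  · set X : EuclideanSpace ℝ (Fin g) := e.symm x
    have hXne : X ≠ 0 := fun h => hx (by simpa [X] using congrArg e h)
    have hr : 0 < ‖X‖ := norm_pos_iff.mpr hXne
    have hmem : (‖X‖⁻¹ • X) ∈ Metric.sphere (0 : EuclideanSpace ℝ (Fin g)) 1 := by
      simp [norm_smul, abs_of_pos (inv_pos.mpr hr), inv_mul_cancel₀ hr.ne']
    have hscale : Q (e (‖X‖⁻¹ • X)) = ‖X‖⁻¹ ^ 2 * Q x := by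
      have : e (‖X‖⁻¹ • X) = ‖X‖⁻¹ • x := by ext i; simp [X]
      rw [this]
      simp only [hQdef, Matrix.mulVec_smul, smul_dotProduct, dotProduct_smul, smul_eq_mul]
      ring
    have hnormsq : ‖X‖ ^ 2 = ∑ i, x i ^ 2 := by
      rw [EuclideanSpace.norm_eq, Real.sq_sqrt (by positivity)]
      refine Finset.sum_congr rfl fun i _ => ?_
      rw [Real.norm_eq_abs, _root_.sq_abs]; rfl
    have hle2 : Q (e u) ≤ Q (e (‖X‖⁻¹ • X)) := hmin hmem
    rw [hscale] at hle2
    show Q (e u) * (∑ i, x i ^ 2) ≤ Q x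
    rw [← hnormsq]
    have h2 : 0 < ‖X‖ ^ 2 := by positivity
    calc Q (e u) * ‖X‖ ^ 2 ≤ (‖X‖⁻¹ ^ 2 * Q x) * ‖X‖ ^ 2 := by nlinarith
    _ = Q x := by field_simp

/-- The theta series `Σ_{n ∈ ℤ^g} exp((iπ/k) nᵗτn + 2iπ n·z)` converges absolutely for
every `τ` in the Siegel upper half-space and every `z ∈ ℂ^g`. -/
theorem theta_series_summable (k g : ℕ) (hk : 1 ≤ k)
    (τ : Matrix (Fin g) (Fin g) ℂ) (hτ : τ.IsSymm)
    (hpos : (τ.map Complex.im).PosDef) (z : Fin g → ℂ) :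
    Summable (fun n : Fin g → ℤ =>
      Complex.exp ((Complex.I * Real.pi / k) *
          ((fun i => (n i : ℂ)) ⬝ᵥ τ.mulVec (fun i => (n i : ℂ)))
        + 2 * Complex.I * Real.pi * ((fun i => (n i : ℂ)) ⬝ᵥ z))) := by
  rcases Nat.eq_zero_or_pos g with rfl | hg
  · exact .of_finite
  obtain ⟨c, hc, hbound⟩ := theta_aux_posdef_bound hg _ hpos
  have hkR : (0:ℝ) < (k:ℝ) := by exact_mod_cast hk
  set M : ℝ := ∑ j, |(z j).im| with hM
  have hMnonneg : 0 ≤ M := Finset.sum_nonneg fun j _ => abs_nonneg _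
  have hyM : ∀ i, |(z i).im| ≤ M :=
    fun i => Finset.single_le_sum (fun j _ => abs_nonneg ((z j).im)) (Finset.mem_univ i)
  set T : ℝ := c / k with hT
  have hTpos : 0 < T := div_pos hc hkR
  set f : ℤ → ℝ := fun m => Real.exp (-Real.pi * (T * (m:ℝ)^2 - 2*M*|(m:ℝ)|)) with hf
  have hfpos : ∀ m, 0 ≤ f m := fun m => (Real.exp_pos _).le
  have hfsummable : Summable f := by
    have := summable_pow_mul_jacobiTheta₂_term_bound M hTpos 0
    refine this.congr fun m => ?_
    simp [hf]
  refine Summable.of_norm_bounded (theta_aux_pi_prod_summable hfpos hfsummable g) fun n => ?_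
  set w : ℂ := (fun i => (n i : ℂ)) ⬝ᵥ τ.mulVec (fun i => (n i : ℂ)) with hw
  set v : ℂ := (fun i => (n i : ℂ)) ⬝ᵥ z with hv
  have hre : (Complex.I * Real.pi / k * w + 2 * Complex.I * Real.pi * v).re
      = -(Real.pi / k) * w.im - 2 * Real.pi * v.im := by
    have h : (Complex.I * Real.pi / k : ℂ) = ((Real.pi / k : ℝ) : ℂ) * Complex.I := by
      push_cast; ring
    rw [h]
    simp [Complex.mul_re, Complex.mul_im]
    ring
  have hwim : w.im = (fun i => (n i : ℝ)) ⬝ᵥ (τ.map Complex.im).mulVec (fun i => (n i : ℝ)) := by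
    simp [hw, dotProduct, Matrix.mulVec, Complex.im_sum, Complex.mul_im, Finset.mul_sum, mul_comm]
  have hvim : v.im = ∑ i, (n i : ℝ) * (z i).im := by
    simp [hv, dotProduct, Complex.im_sum, Complex.mul_im]
  rw [Complex.norm_exp, hre]
  have hprod : ∏ i, f (n i) = Real.exp (∑ i, (-Real.pi * (T * ((n i : ℝ))^2 - 2*M*|(n i : ℝ)|))) := by
    rw [Real.exp_sum]
  rw [hprod, Real.exp_le_exp]
  have hRHS : ∑ i, (-Real.pi * (T * ((n i : ℝ))^2 - 2*M*|(n i : ℝ)|))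
      = -(Real.pi * T) * (∑ i, ((n i : ℝ))^2) + 2*Real.pi*M*(∑ i, |(n i : ℝ)|) := by
    have step : ∀ i ∈ Finset.univ, (-Real.pi * (T * ((n i : ℝ))^2 - 2*M*|(n i : ℝ)|))
        = (-(Real.pi*T)) * ((n i : ℝ))^2 + (2*Real.pi*M) * |(n i : ℝ)| := fun i _ => by ring
    rw [Finset.sum_congr rfl step, Finset.sum_add_distrib, ← Finset.mul_sum, ← Finset.mul_sum]
  rw [hRHS, hwim, hvim]
  have hQ := hbound (fun i => (n i : ℝ))
  have hS : -(∑ i, (n i : ℝ) * (z i).im) ≤ M * ∑ i, |(n i : ℝ)| := by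
    rw [Finset.mul_sum, ← Finset.sum_neg_distrib]
    refine Finset.sum_le_sum fun i _ => ?_
    calc -((n i : ℝ) * (z i).im) ≤ |(n i : ℝ) * (z i).im| := neg_le_abs _
    _ = |(n i : ℝ)| * |(z i).im| := abs_mul _ _
    _ ≤ |(n i : ℝ)| * M := mul_le_mul_of_nonneg_left (hyM i) (abs_nonneg _)
    _ = M * |(n i : ℝ)| := mul_comm _ _
  have hπ := Real.pi_pos
  have hTk : Real.pi / k * c = Real.pi * T := by
    rw [hT]; field_simp
  have h0 := mul_le_mul_of_nonneg_left hQ (div_pos hπ hkR).le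
  have heq : Real.pi * T * (∑ i, ((n i : ℝ))^2) = Real.pi / k * (c * ∑ i, ((n i : ℝ))^2) := by
    rw [hT]; ring
  have h2 := mul_le_mul_of_nonneg_left hS (by positivity : (0:ℝ) ≤ 2 * Real.pi)
  nlinarith [h0, heq, h2]
end

section
/- On the 𝔽₂-vector space 𝔽₂^{2g} with the standard symplectic form ω((x,y),(x′,y′)) = Σ(x_i y′_i + y_i x′_i), every quadratic refinement q (i.e. q(a+b) = q(a)+q(b)+ω(a,b)) is equivalent under the symplectic group Sp_{2g}(𝔽₂) to exactly one of the two standard forms q₀(x,y) = Σ x_i y_i or q₁(x,y) = Σ x_i y_i + x₁² + y₁², distinguished by the Arf invariant. -/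
/-- The 𝔽₂-symplectic vector space `𝔽₂^{2g}`. -/
abbrev SpinSpace (g : ℕ) := (Fin g → ZMod 2) × (Fin g → ZMod 2)

/-- The standard symplectic form `ω((x,y),(x',y')) = Σ (xᵢ y'ᵢ + yᵢ x'ᵢ)`. -/
def stdSymp (g : ℕ) (v w : SpinSpace g) : ZMod 2 :=
  ∑ i : Fin g, (v.1 i * w.2 i + v.2 i * w.1 i)

/-- The standard quadratic refinement with Arf invariant `0`: `q₀(x,y) = Σ xᵢ yᵢ`. -/
def q₀ (g : ℕ) (v : SpinSpace g) : ZMod 2 := ∑ i : Fin g, v.1 i * v.2 i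

/-- The standard quadratic refinement with Arf invariant `1`:
`q₁(x,y) = Σ xᵢ yᵢ + x₁² + y₁²`. -/
def q₁ (g : ℕ) (hg : 0 < g) (v : SpinSpace g) : ZMod 2 :=
  q₀ g v + v.1 ⟨0, hg⟩ * v.1 ⟨0, hg⟩ + v.2 ⟨0, hg⟩ * v.2 ⟨0, hg⟩

/-- The `i`-th standard symplectic basis vector `eᵢ`. -/
def eBasis (g : ℕ) (i : Fin g) : SpinSpace g := (Pi.single i 1, 0)

/-- The `i`-th standard symplectic basis vector `fᵢ`. -/
def fBasis (g : ℕ) (i : Fin g) : SpinSpace g := (0, Pi.single i 1)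

/-- The Arf invariant `Σ q(eᵢ) q(fᵢ)` of a quadratic refinement. -/
def arfInv (g : ℕ) (q : SpinSpace g → ZMod 2) : ZMod 2 :=
  ∑ i : Fin g, q (eBasis g i) * q (fBasis g i)

namespace QRC
variable {g : ℕ}

lemma z2_add_self (a : ZMod 2) : a + a = 0 := by revert a; decide
lemma z2_mul_self (a : ZMod 2) : a * a = a := by revert a; decide
lemma z2_cases (a : ZMod 2) : a = 0 ∨ a = 1 := by revert a; decide

lemma symp_comm (v w : SpinSpace g) : stdSymp g v w = stdSymp g w v := by
  unfold stdSymp; exact Finset.sum_congr rfl fun i _ => by ring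

lemma symp_self (v : SpinSpace g) : stdSymp g v v = 0 := by
  unfold stdSymp
  exact Finset.sum_eq_zero fun i _ => by rw [mul_comm]; exact z2_add_self _

lemma symp_add_left (u v w : SpinSpace g) :
    stdSymp g (u + v) w = stdSymp g u w + stdSymp g v w := by
  unfold stdSymp; rw [← Finset.sum_add_distrib]
  exact Finset.sum_congr rfl fun i _ => by
    simp [Prod.fst_add, Prod.snd_add, Pi.add_apply]; ring

lemma symp_add_right (u v w : SpinSpace g) :
    stdSymp g u (v + w) = stdSymp g u v + stdSymp g u w := by
  rw [symp_comm, symp_add_left, symp_comm v u, symp_comm w u]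

lemma symp_smul_right (s : ZMod 2) (u v : SpinSpace g) :
    stdSymp g u (s • v) = s * stdSymp g u v := by
  unfold stdSymp; rw [Finset.mul_sum]
  exact Finset.sum_congr rfl fun i _ => by
    simp [Prod.smul_fst, Prod.smul_snd, Pi.smul_apply, smul_eq_mul]; ring

lemma symp_smul_left (s : ZMod 2) (u v : SpinSpace g) :
    stdSymp g (s • u) v = s * stdSymp g u v := by
  rw [symp_comm, symp_smul_right, symp_comm]

lemma q₀_add (a b : SpinSpace g) :
    q₀ g (a + b) = q₀ g a + q₀ g b + stdSymp g a b := by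
  unfold q₀ stdSymp
  rw [← Finset.sum_add_distrib, ← Finset.sum_add_distrib]
  exact Finset.sum_congr rfl fun i _ => by
    simp [Prod.fst_add, Prod.snd_add, Pi.add_apply]; ring

end QRC

namespace QRC
variable {g : ℕ}

/-- Transvection as a linear map. -/
def tv (b : SpinSpace g) : SpinSpace g →ₗ[ZMod 2] SpinSpace g where
  toFun v := v + stdSymp g b v • b
  map_add' u v := by
    rw [symp_add_right, add_smul]; abel
  map_smul' s v := by
    simp only [RingHom.id_apply, symp_smul_right, smul_add, mul_smul]

lemma tv_invol (b : SpinSpace g) : Function.Involutive (tv b) := by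
  intro v
  show (v + stdSymp g b v • b) + stdSymp g b (v + stdSymp g b v • b) • b = v
  rw [symp_add_right, symp_smul_right, symp_self, mul_zero, add_zero]
  rw [add_assoc, ← add_smul, z2_add_self, zero_smul, add_zero]

/-- Transvection as a linear equivalence. -/
def tve (b : SpinSpace g) : SpinSpace g ≃ₗ[ZMod 2] SpinSpace g :=
  LinearEquiv.ofInvolutive (tv b) (tv_invol b)

lemma tve_apply (b v : SpinSpace g) : tve b v = v + stdSymp g b v • b := rfl

lemma tve_symp (b x y : SpinSpace g) :
    stdSymp g (tve b x) (tve b y) = stdSymp g x y := by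
  rw [tve_apply, tve_apply, symp_add_left, symp_add_right, symp_add_right,
    symp_smul_left, symp_smul_right, symp_smul_left, symp_smul_right,
    symp_self, mul_zero, mul_zero, symp_comm b x, mul_comm]
  rw [add_zero, add_assoc, z2_add_self, add_zero]

variable (q : SpinSpace g → ZMod 2)
  (hq : ∀ a b : SpinSpace g, q (a + b) = q a + q b + stdSymp g a b)
include hq

lemma q_zero : q 0 = 0 := by
  have := hq 0 0
  rw [add_zero, symp_self, add_zero] at this
  have h := congrArg (· + q 0) this
  simpa [add_assoc, z2_add_self] using h.symm

lemma q_smul (s : ZMod 2) (v : SpinSpace g) : q (s • v) = s * q v := by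
  rcases z2_cases s with h | h <;> subst h
  · simpa using q_zero q hq
  · simp

lemma q_tve (b v : SpinSpace g) :
    q (tve b v) = q v + stdSymp g b v * (q b + 1) := by
  rw [tve_apply, hq, q_smul q hq, symp_smul_right, symp_comm v b, z2_mul_self]
  ring

end QRC


namespace QRC
variable {g : ℕ}

lemma basis_decomp (v : SpinSpace g) :
    v = ∑ i, v.1 i • eBasis g i + ∑ i, v.2 i • fBasis g i := by
  apply Prod.ext <;>
    simp [eBasis, fBasis, Prod.fst_sum, Prod.snd_sum, Prod.smul_fst, Prod.smul_snd] <;>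
    funext j <;>
    simp [Finset.sum_apply, Pi.single_apply]

lemma q₀_e (i : Fin g) : q₀ g (eBasis g i) = 0 := by simp [q₀, eBasis]
lemma q₀_f (i : Fin g) : q₀ g (fBasis g i) = 0 := by simp [q₀, fBasis]

variable (q : SpinSpace g → ZMod 2)

def lfun (v : SpinSpace g) : ZMod 2 := q v + q₀ g v

def cvec : SpinSpace g := (fun i => lfun q (fBasis g i), fun i => lfun q (eBasis g i))

variable (hq : ∀ a b : SpinSpace g, q (a + b) = q a + q b + stdSymp g a b)
include hq

lemma lfun_add (a b : SpinSpace g) : lfun q (a + b) = lfun q a + lfun q b := by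
  unfold lfun; rw [hq, q₀_add]
  linear_combination z2_add_self (stdSymp g a b)

lemma lfun_smul (s : ZMod 2) (v : SpinSpace g) : lfun q (s • v) = s * lfun q v := by
  rcases z2_cases s with h | h <;> subst h
  · simp [lfun, q_zero q hq, q₀]
  · simp

lemma hc (v : SpinSpace g) : q v = q₀ g v + stdSymp g (cvec q) v := by
  have hL : stdSymp g (cvec q) v = lfun q v := by
    set L : SpinSpace g →+ ZMod 2 := AddMonoidHom.mk' (lfun q) (lfun_add q hq) with hLdef
    have h1 : lfun q v = L v := rfl
    rw [h1]
    conv_rhs => rw [basis_decomp v]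
    rw [map_add, map_sum, map_sum]
    have he : ∀ i, L (v.1 i • eBasis g i) = v.1 i * lfun q (eBasis g i) :=
      fun i => lfun_smul q hq _ _
    have hf : ∀ i, L (v.2 i • fBasis g i) = v.2 i * lfun q (fBasis g i) :=
      fun i => lfun_smul q hq _ _
    simp only [he, hf]
    unfold stdSymp cvec
    rw [← Finset.sum_add_distrib]
    exact Finset.sum_congr rfl fun i _ => by ring
  rw [hL]; unfold lfun
  linear_combination -z2_add_self (q₀ g v)

end QRC

namespace QRC
variable {g : ℕ}

def chi (t : ZMod 2) : ℤ := if t = 0 then 1 else -1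

lemma chi_add (a b : ZMod 2) : chi (a + b) = chi a * chi b := by
  revert a b; decide

lemma chi_sum {ι : Type*} (s : Finset ι) (f : ι → ZMod 2) :
    chi (∑ i ∈ s, f i) = ∏ i ∈ s, chi (f i) := by
  classical
  induction s using Finset.cons_induction with
  | empty => simp [chi]
  | cons a s ha ih => rw [Finset.sum_cons, Finset.prod_cons, chi_add, ih]

def S (q : SpinSpace g → ZMod 2) : ℤ := ∑ v : SpinSpace g, chi (q v)

lemma S_q₀ : S (q₀ g) = 2 ^ g := by
  unfold S q₀
  rw [← Equiv.sum_comp (Equiv.arrowProdEquivProdArrow (Fin g) (fun _ => ZMod 2) (fun _ => ZMod 2))]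
  simp only [Equiv.arrowProdEquivProdArrow, Equiv.coe_fn_mk]
  simp only [chi_sum]
  rw [← Fintype.prod_sum (fun (_ : Fin g) (p : ZMod 2 × ZMod 2) => chi (p.1 * p.2))]
  have h2 : ∑ p : ZMod 2 × ZMod 2, chi (p.1 * p.2) = 2 := by decide
  rw [Finset.prod_congr rfl fun i _ => h2, Finset.prod_const]
  simp

lemma S_shift (q : SpinSpace g → ZMod 2) (d : SpinSpace g)
    (h : ∀ v, q v = q₀ g v + stdSymp g d v) : S q = chi (q₀ g d) * 2 ^ g := by
  have key : ∀ v, q (v + d) = q₀ g v + q₀ g d := by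
    intro v
    rw [h, q₀_add, symp_add_right, symp_self, symp_comm d v]
    linear_combination z2_add_self (stdSymp g v d)
  have : S q = ∑ v : SpinSpace g, chi (q (v + d)) :=
    (Equiv.sum_comp (Equiv.addRight d) (fun v => chi (q v))).symm
  rw [this]
  simp only [key, chi_add]
  rw [← Finset.sum_mul, ← S_q₀, S]
  ring

lemma S_comp (q : SpinSpace g → ZMod 2) (A : SpinSpace g ≃ₗ[ZMod 2] SpinSpace g) :
    (∑ v : SpinSpace g, chi (q (A v))) = S q :=
  Equiv.sum_comp A.toEquiv (fun v => chi (q v))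

lemma symp_e (c : SpinSpace g) (i : Fin g) : stdSymp g c (eBasis g i) = c.2 i := by
  simp [stdSymp, eBasis, Pi.single_apply]

lemma symp_f (c : SpinSpace g) (i : Fin g) : stdSymp g c (fBasis g i) = c.1 i := by
  simp [stdSymp, fBasis, Pi.single_apply]

end QRC

namespace QRC
variable {g : ℕ}

lemma arf_eq (q : SpinSpace g → ZMod 2)
    (hq : ∀ a b : SpinSpace g, q (a + b) = q a + q b + stdSymp g a b) :
    arfInv g q = q₀ g (cvec q) := by
  unfold arfInv
  have he : ∀ i, q (eBasis g i) = (cvec q).2 i := by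
    intro i; rw [hc q hq, q₀_e, symp_e, zero_add]
  have hf : ∀ i, q (fBasis g i) = (cvec q).1 i := by
    intro i; rw [hc q hq, q₀_f, symp_f, zero_add]
  simp only [he, hf]
  exact Finset.sum_congr rfl fun i _ => mul_comm _ _

lemma q₁_shift (hg : 0 < g) (v : SpinSpace g) :
    q₁ g hg v = q₀ g v + stdSymp g (eBasis g ⟨0, hg⟩ + fBasis g ⟨0, hg⟩) v := by
  unfold q₁
  rw [symp_add_left, symp_comm, symp_e, symp_comm, symp_f,
    z2_mul_self (v.1 ⟨0, hg⟩), z2_mul_self (v.2 ⟨0, hg⟩)]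
  ring

lemma q₀_c₁ (hg : 0 < g) : q₀ g (eBasis g ⟨0, hg⟩ + fBasis g ⟨0, hg⟩) = 1 := by
  simp [q₀, eBasis, fBasis, Pi.single_apply]

/-- Existence of an equivalence to `q₀` when `q₀ (cvec q) = 0`. -/
lemma ex0 (q : SpinSpace g → ZMod 2)
    (hq : ∀ a b : SpinSpace g, q (a + b) = q a + q b + stdSymp g a b)
    (h0 : q₀ g (cvec q) = 0) :
    ∃ A : SpinSpace g ≃ₗ[ZMod 2] SpinSpace g,
      (∀ x y, stdSymp g (A x) (A y) = stdSymp g x y) ∧ ∀ v, q (A v) = q₀ g v := by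
  refine ⟨tve (cvec q), fun x y => tve_symp _ x y, fun v => ?_⟩
  have hqc : q (cvec q) = 0 := by rw [hc q hq, symp_self, add_zero, h0]
  rw [q_tve q hq, hc q hq v, hqc]
  linear_combination z2_add_self (stdSymp g (cvec q) v)

/-- Existence of an equivalence to `q₁` when `q₀ (cvec q) = 1`. -/
lemma ex1 (hg : 0 < g) (q : SpinSpace g → ZMod 2)
    (hq : ∀ a b : SpinSpace g, q (a + b) = q a + q b + stdSymp g a b)
    (h1 : q₀ g (cvec q) = 1) :
    ∃ A : SpinSpace g ≃ₗ[ZMod 2] SpinSpace g,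
      (∀ x y, stdSymp g (A x) (A y) = stdSymp g x y) ∧ ∀ v, q (A v) = q₁ g hg v := by
  have hqb : q (cvec q + (eBasis g ⟨0, hg⟩ + fBasis g ⟨0, hg⟩)) = 0 := by
    rw [hq, hc q hq (cvec q), hc q hq (eBasis g ⟨0, hg⟩ + fBasis g ⟨0, hg⟩),
      symp_self, add_zero, h1, q₀_c₁ hg]
    linear_combination z2_add_self (stdSymp g (cvec q) (eBasis g ⟨0, hg⟩ + fBasis g ⟨0, hg⟩))
      + z2_add_self 1
  refine ⟨tve (cvec q + (eBasis g ⟨0, hg⟩ + fBasis g ⟨0, hg⟩)),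
    fun x y => tve_symp _ x y, fun v => ?_⟩
  rw [q_tve q hq, hc q hq v, hqb, q₁_shift hg, symp_add_left]
  linear_combination z2_add_self (stdSymp g (cvec q) v)

end QRC

/-- Every quadratic refinement of the standard symplectic form on `𝔽₂^{2g}` is
equivalent under `Sp_{2g}(𝔽₂)` to exactly one of the two standard forms `q₀`, `q₁`,
the two cases being distinguished by the Arf invariant. -/
theorem quadratic_refinement_classification (g : ℕ) (hg : 0 < g)
    (q : SpinSpace g → ZMod 2)
    (hq : ∀ a b : SpinSpace g, q (a + b) = q a + q b + stdSymp g a b) :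
    ((∃ A : SpinSpace g ≃ₗ[ZMod 2] SpinSpace g,
        (∀ x y, stdSymp g (A x) (A y) = stdSymp g x y) ∧
        ((∀ v, q (A v) = q₀ g v) ∨ (∀ v, q (A v) = q₁ g hg v))) ∧
      ¬((∃ A : SpinSpace g ≃ₗ[ZMod 2] SpinSpace g,
            (∀ x y, stdSymp g (A x) (A y) = stdSymp g x y) ∧ ∀ v, q (A v) = q₀ g v) ∧
        (∃ A : SpinSpace g ≃ₗ[ZMod 2] SpinSpace g,
            (∀ x y, stdSymp g (A x) (A y) = stdSymp g x y) ∧ ∀ v, q (A v) = q₁ g hg v))) ∧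
    ((∃ A : SpinSpace g ≃ₗ[ZMod 2] SpinSpace g,
        (∀ x y, stdSymp g (A x) (A y) = stdSymp g x y) ∧ ∀ v, q (A v) = q₀ g v) ↔
      arfInv g q = 0) := by
  have hcv : ∀ v, q v = q₀ g v + stdSymp g (QRC.cvec q) v := QRC.hc q hq
  have hSq : QRC.S q = QRC.chi (q₀ g (QRC.cvec q)) * 2 ^ g := QRC.S_shift q _ hcv
  have hchi1 : QRC.chi 1 = -1 := by decide
  have hSq₁ : QRC.S (q₁ g hg) = -(2 ^ g) := by
    rw [QRC.S_shift (q₁ g hg) _ (QRC.q₁_shift hg), QRC.q₀_c₁ hg, hchi1]; ring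
  have h2pos : (0:ℤ) < 2 ^ g := by positivity
  have key0 : (∃ A : SpinSpace g ≃ₗ[ZMod 2] SpinSpace g,
      (∀ x y, stdSymp g (A x) (A y) = stdSymp g x y) ∧ ∀ v, q (A v) = q₀ g v) ↔
      q₀ g (QRC.cvec q) = 0 := by
    constructor
    · rintro ⟨A, -, hA⟩
      have hS : QRC.S q = 2 ^ g := by
        calc QRC.S q = ∑ v : SpinSpace g, QRC.chi (q (A v)) := (QRC.S_comp q A).symm
        _ = ∑ v : SpinSpace g, QRC.chi (q₀ g v) :=
            Finset.sum_congr rfl fun v _ => by rw [hA]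
        _ = 2 ^ g := QRC.S_q₀
      rcases QRC.z2_cases (q₀ g (QRC.cvec q)) with h | h
      · exact h
      · rw [hS, h, hchi1] at hSq; linarith
    · exact fun h => QRC.ex0 q hq h
  refine ⟨⟨?_, ?_⟩, ?_⟩
  · rcases QRC.z2_cases (q₀ g (QRC.cvec q)) with h | h
    · obtain ⟨A, hs, he⟩ := QRC.ex0 q hq h; exact ⟨A, hs, Or.inl he⟩
    · obtain ⟨A, hs, he⟩ := QRC.ex1 hg q hq h; exact ⟨A, hs, Or.inr he⟩
  · rintro ⟨hA, ⟨B, -, hB⟩⟩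
    have h0 : q₀ g (QRC.cvec q) = 0 := key0.mp hA
    have hS1 : QRC.S q = 2 ^ g := by
      rw [hSq, h0]; show QRC.chi 0 * 2 ^ g = 2 ^ g; norm_num [QRC.chi]
    have hS2 : QRC.S q = -(2 ^ g) := by
      calc QRC.S q = ∑ v : SpinSpace g, QRC.chi (q (B v)) := (QRC.S_comp q B).symm
      _ = ∑ v : SpinSpace g, QRC.chi (q₁ g hg v) :=
          Finset.sum_congr rfl fun v _ => by rw [hB]
      _ = -(2 ^ g) := hSq₁
    linarith
  · rw [QRC.arf_eq q hq]; exact key0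
end
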